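/- Let (Ω, ℱ, P; (ℱ_s)) be a filtered probability space and fix times t ≤ T. Suppose γ maps each stopping time τ ≤ T to an adapted control γ[τ] : [t,T] × Ω → M and satisfies: for all stopping times τ₁, τ₂ and all s ∈ [t,T], almost surely on { min(τ₁,τ₂) > s } one has γ[τ₁]_r = γ[τ₂]_r for all r ∈ [t,s). Then for every stopping time τ ≤ T, almost surely γ[τ]_r(ω) = γ[T]_r(ω) for all r ∈ [t, τ(ω)). (I.e., a non-anticipating controller strategy coincides on [t,τ) with the single control γ[T].) -/

import Mathlib

open MeasureTheory Set Filter

/-- If γ maps stopping times τ ≤ T to M-valued controls on [t,T] and is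
non-anticipating (for all stopping times τ₁, τ₂ and s ∈ [t,T], a.s. on {min(τ₁,τ₂) > s}
one has γ[τ₁]_r = γ[τ₂]_r for r ∈ [t,s)), then for every stopping time τ ≤ T, almost
surely γ[τ]_r = γ[T]_r for all r ∈ [t, τ(ω)). -/
theorem controller_strategy_useless {Ω : Type*} {m : MeasurableSpace Ω}
    (P : Measure Ω) [IsProbabilityMeasure P]
    (ℱ : Filtration ℝ m) {M : Type*} [MetricSpace M]
    (t T : ℝ) (htT : t ≤ T)
    (γ : (Ω → ℝ) → ℝ → Ω → M)
    (hna : ∀ τ₁ τ₂ : Ω → ℝ, IsStoppingTime ℱ (fun ω => (τ₁ ω : WithTop ℝ)) → IsStoppingTime ℱ (fun ω => (τ₂ ω : WithTop ℝ)) →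
      (∀ ω, τ₁ ω ≤ T) → (∀ ω, τ₂ ω ≤ T) →
      ∀ s ∈ Set.Icc t T,
        ∀ᵐ ω ∂P, s < min (τ₁ ω) (τ₂ ω) →
          ∀ r ∈ Set.Ico t s, γ τ₁ r ω = γ τ₂ r ω) :
    ∀ τ : Ω → ℝ, IsStoppingTime ℱ (fun ω => (τ ω : WithTop ℝ)) → (∀ ω, τ ω ≤ T) →
      ∀ᵐ ω ∂P, ∀ r ∈ Set.Ico t (τ ω), γ τ r ω = γ (fun _ => T) r ω := by
  intro τ hτ hτT
  have key : ∀ᵐ ω ∂P, ∀ q : ℚ, (q : ℝ) ∈ Set.Icc t T →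
      (q : ℝ) < min (τ ω) T → ∀ r ∈ Set.Ico t (q : ℝ),
        γ τ r ω = γ (fun _ => T) r ω := by
    rw [ae_all_iff]
    intro q
    by_cases hq : (q : ℝ) ∈ Set.Icc t T
    · filter_upwards [hna τ (fun _ => T) hτ (isStoppingTime_const ℱ T) hτT
        (fun _ => le_refl T) q hq] with ω hω
      intro _ hlt r hr
      exact hω hlt r hr
    · filter_upwards with ω h
      exact absurd h hq
  filter_upwards [key] with ω hω r hr
  obtain ⟨q, hq1, hq2⟩ := exists_rat_btwn hr.2
  have hqT : (q : ℝ) < T := lt_of_lt_of_le hq2 (hτT ω)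
  have hqIcc : (q : ℝ) ∈ Set.Icc t T := ⟨le_trans hr.1 hq1.le, hqT.le⟩
  exact hω q hqIcc (lt_min hq2 hqT) r ⟨hr.1, hq1⟩
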